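/- Suppose ε ∈ (0,1/2) and K ⊂ R^n is a convex body with (1−ε)B ⊆ K ⊆ (1+ε)B that satisfies K = C_K·ΓK for some constant C_K > 0. Then ((1−ε)/(1+ε))^{n+1} ≤ C_B/C_K ≤ ((1+ε)/(1−ε))^{n+1}, where C_B = (n+1)κ_n/(2κ_{n−1}). -/

import Mathlib

open MeasureTheory Pointwise

/-- κ_m: the volume of the unit Euclidean ball in ℝ^m. -/
noncomputable def unitBallVol (m : ℕ) : ℝ :=
  (volume (Metric.ball (0 : EuclideanSpace ℝ (Fin m)) 1)).toReal

/-- The centroid body ΓK, described as the intersection of the half-spaces determined by its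
support function h_{ΓK}(φ) = (1/vol(K)) ∫_K |⟨φ,x⟩| dx. -/
noncomputable def centroidBody (n : ℕ) (K : Set (EuclideanSpace ℝ (Fin n))) :
    Set (EuclideanSpace ℝ (Fin n)) :=
  {y | ∀ φ : EuclideanSpace ℝ (Fin n),
    (inner ℝ y φ : ℝ) ≤ (volume K).toReal⁻¹ * ∫ x in K, |(inner ℝ φ x : ℝ)|}

section AuxLemmas

open intervalIntegral

lemma aux_deriv (m : ℕ) {x : ℝ} (hx : x^2 < 1) :
    HasDerivAt (fun t : ℝ => -(Real.sqrt (1 - t^2) ^ (m+2)) / (m+2))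
      (x * Real.sqrt (1 - x^2) ^ m) x := by
  have hpos : 0 < 1 - x^2 := by nlinarith
  have h1 : HasDerivAt (fun t : ℝ => 1 - t^2) (-(2*x)) x := by
    simpa using ((hasDerivAt_pow 2 x).const_sub 1)
  have h2 : HasDerivAt (fun t : ℝ => Real.sqrt (1 - t^2))
      (-(2*x) / (2 * Real.sqrt (1 - x^2))) x :=
    (Real.hasDerivAt_sqrt hpos.ne').comp x h1 |>.congr_deriv (by ring)
  have h3 : HasDerivAt (fun t : ℝ => Real.sqrt (1 - t^2) ^ (m+2))
      ((m+2 : ℕ) * Real.sqrt (1 - x^2) ^ (m+1) * (-(2*x) / (2 * Real.sqrt (1 - x^2)))) x :=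
    (hasDerivAt_pow (m+2) _).comp x h2
  have hs : Real.sqrt (1 - x^2) > 0 := Real.sqrt_pos.2 hpos
  have : HasDerivAt (fun t => -(Real.sqrt (1 - t^2) ^ (m+2) / ((m:ℝ)+2)))
      (-(((m+2 : ℕ) * Real.sqrt (1 - x^2) ^ (m+1) * (-(2*x) / (2 * Real.sqrt (1 - x^2))))
        / ((m:ℝ)+2))) x := (h3.div_const ((m:ℝ)+2)).neg
  have hne : Real.sqrt (1 - x^2) ≠ 0 := hs.ne'
  convert this using 1
  · funext t; ring
  · rw [pow_succ]
    push_cast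
    have hm : (m:ℝ) + 2 ≠ 0 := by positivity
    field_simp
    have hne' : Real.sqrt (1 - x*x) ≠ 0 := by
      rw [show (1 - x*x) = 1 - x^2 by ring]; exact hne
    ring

lemma aux_integral (m : ℕ) :
    ∫ t in (-1:ℝ)..(1:ℝ), |t| * Real.sqrt (1 - t^2) ^ m = 2 / (m + 2) := by
  have hcont : Continuous fun t : ℝ => |t| * Real.sqrt (1 - t^2) ^ m := by
    fun_prop
  have hcont2 : Continuous fun t : ℝ => t * Real.sqrt (1 - t^2) ^ m := by fun_prop
  have I1 : ∫ t in (0:ℝ)..(1:ℝ), t * Real.sqrt (1 - t^2) ^ m = 1 / (m + 2) := by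
    rw [integral_eq_sub_of_hasDeriv_right_of_le zero_le_one
      (f := fun t : ℝ => -(Real.sqrt (1 - t^2) ^ (m+2)) / (m+2))
      (by fun_prop)
      (fun x hx => (aux_deriv m (by nlinarith [hx.1, hx.2])).hasDerivWithinAt)
      (hcont2.intervalIntegrable _ _)]
    simp [Real.sqrt_zero, Real.sqrt_one]
    ring
  have I2 : ∫ t in (-1:ℝ)..(0:ℝ), -(t * Real.sqrt (1 - t^2) ^ m) = 1 / (m + 2) := by
    have hd : ∀ x ∈ Set.Ioo (-1:ℝ) 0,
        HasDerivAt (fun t : ℝ => Real.sqrt (1 - t^2) ^ (m+2) / (m+2))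
          (-(x * Real.sqrt (1 - x^2) ^ m)) x := by
      intro x hx
      have : HasDerivAt (fun t => -(-(Real.sqrt (1 - t^2) ^ (m+2)) / ((m:ℝ)+2)))
          (-(x * Real.sqrt (1 - x^2) ^ m)) x := (aux_deriv m (x := x) (by nlinarith [hx.1, hx.2])).neg
      convert this using 1
      funext t; ring
    rw [integral_eq_sub_of_hasDeriv_right_of_le (by norm_num)
      (f := fun t : ℝ => Real.sqrt (1 - t^2) ^ (m+2) / (m+2))
      (by fun_prop)
      (fun x hx => (hd x hx).hasDerivWithinAt)
      ((hcont2.neg).intervalIntegrable _ _)]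
    norm_num
  rw [← intervalIntegral.integral_add_adjacent_intervals (b := (0:ℝ))
    (hcont.intervalIntegrable _ _) (hcont.intervalIntegrable _ _)]
  have e1 : ∫ t in (-1:ℝ)..(0:ℝ), |t| * Real.sqrt (1 - t^2) ^ m
      = ∫ t in (-1:ℝ)..(0:ℝ), -(t * Real.sqrt (1 - t^2) ^ m) := by
    apply intervalIntegral.integral_congr
    intro t ht
    rw [Set.uIcc_of_le (by norm_num : (-1:ℝ) ≤ 0)] at ht
    dsimp only
    rw [abs_of_nonpos ht.2, neg_mul]
  have e2 : ∫ t in (0:ℝ)..(1:ℝ), |t| * Real.sqrt (1 - t^2) ^ m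
      = ∫ t in (0:ℝ)..(1:ℝ), t * Real.sqrt (1 - t^2) ^ m := by
    apply intervalIntegral.integral_congr
    intro t ht
    rw [Set.uIcc_of_le (by norm_num : (0:ℝ) ≤ 1)] at ht
    dsimp only
    rw [abs_of_nonneg ht.1]
  rw [e1, e2, I1, I2]
  ring

lemma slice_vol (m : ℕ) {R : ℝ} (hR : 0 ≤ R) :
    volume {y : Fin m → ℝ | ∑ j, y j ^ 2 ≤ R}
      = ENNReal.ofReal (Real.sqrt R ^ m)
        * volume (Metric.ball (0 : EuclideanSpace ℝ (Fin m)) 1) := by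
  have hS : MeasurableSet {y : Fin m → ℝ | ∑ j, y j ^ 2 ≤ R} :=
    (isClosed_le (by fun_prop) continuous_const).measurableSet
  have hmp := EuclideanSpace.volume_preserving_symm_measurableEquiv_toLp (Fin m)
  rw [← hmp.measure_preimage hS.nullMeasurableSet]
  have hpre : ((MeasurableEquiv.toLp 2 (Fin m → ℝ)).symm) ⁻¹' {y : Fin m → ℝ | ∑ j, y j ^ 2 ≤ R}
      = Metric.closedBall (0 : EuclideanSpace ℝ (Fin m)) (Real.sqrt R) := by
    ext x
    simp only [Set.mem_preimage, Set.mem_setOf_eq, Metric.mem_closedBall, dist_zero_right]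
    rw [EuclideanSpace.norm_eq]
    constructor
    · intro h
      apply Real.sqrt_le_sqrt
      simpa using h
    · intro h
      have := (Real.sqrt_le_sqrt_iff (by positivity)).1 (by simpa using h)
      simpa using this
  rw [hpre, MeasureTheory.Measure.addHaar_closedBall volume 0 (Real.sqrt_nonneg R),
    finrank_euclideanSpace_fin]

lemma ball_integral_coord (m : ℕ) :
    ∫ x in Metric.closedBall (0 : EuclideanSpace ℝ (Fin (m+1))) 1,
      |x 0| = 2 / (m + 2) * unitBallVol m := by
  classical
  set S : Set (Fin (m+1) → ℝ) := {y | ∑ j, y j ^ 2 ≤ 1} with hSdef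
  set T : Set (ℝ × (Fin m → ℝ)) := {p | p.1^2 + ∑ j, p.2 j ^ 2 ≤ 1} with hTdef
  have hmp := EuclideanSpace.volume_preserving_symm_measurableEquiv_toLp (Fin (m+1))
  have hpre : ((MeasurableEquiv.toLp 2 (Fin (m+1) → ℝ)).symm) ⁻¹' S
      = Metric.closedBall (0 : EuclideanSpace ℝ (Fin (m+1))) 1 := by
    ext x
    simp only [Set.mem_preimage, hSdef, Set.mem_setOf_eq, Metric.mem_closedBall,
      dist_zero_right]
    rw [EuclideanSpace.norm_eq, show (1:ℝ) = Real.sqrt 1 by simp]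
    constructor
    · intro h; apply Real.sqrt_le_sqrt; simpa using h
    · intro h
      have := (Real.sqrt_le_sqrt_iff (by positivity)).1 h
      simpa using this
  have step1 : ∫ x in Metric.closedBall (0 : EuclideanSpace ℝ (Fin (m+1))) 1, |x 0|
      = ∫ y in S, |y 0| := by
    have h := hmp.setIntegral_preimage_emb
      ((MeasurableEquiv.toLp 2 (Fin (m+1) → ℝ)).symm).measurableEmbedding (fun y => |y 0|) S
    rw [hpre] at h
    have hfe : (fun x : EuclideanSpace ℝ (Fin (m+1)) =>
        |((MeasurableEquiv.toLp 2 (Fin (m+1) → ℝ)).symm) x 0|)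
        = (fun x : EuclideanSpace ℝ (Fin (m+1)) => |x 0|) := rfl
    rw [hfe] at h
    exact h
  set e := MeasurableEquiv.piFinSuccAbove (fun _ : Fin (m+1) => ℝ) 0 with hedef
  have hpre2 : e ⁻¹' T = S := by
    ext y
    simp only [Set.mem_preimage, hTdef, hSdef, Set.mem_setOf_eq]
    show (y 0)^2 + ∑ j, y (Fin.succAbove 0 j) ^ 2 ≤ 1 ↔ ∑ i, y i ^ 2 ≤ 1
    rw [Fin.sum_univ_succAbove (fun i => y i ^ 2) 0]
  have step2 : ∫ y in S, |y 0| = ∫ p in T, |p.1| := by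
    have h := (MeasureTheory.volume_preserving_piFinSuccAbove (fun _ : Fin (m+1) => ℝ)
      0).setIntegral_preimage_emb e.measurableEmbedding (fun p => |p.1|) T
    rw [hpre2] at h
    have hfe : (fun y : Fin (m+1) → ℝ =>
        |((MeasurableEquiv.piFinSuccAbove (fun _ : Fin (m+1) => ℝ) 0) y).1|)
        = (fun y : Fin (m+1) → ℝ => |y 0|) := rfl
    rw [hfe] at h
    exact h
  have hTmeas : MeasurableSet T :=
    (isClosed_le (by fun_prop) continuous_const).measurableSet
  have hTcomp : IsCompact T := by
    refine (isCompact_closedBall (0 : ℝ × (Fin m → ℝ)) 1).of_isClosed_subset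
      (isClosed_le (by fun_prop) continuous_const) ?_
    intro p hp
    have hsum : (0:ℝ) ≤ ∑ j, p.2 j ^ 2 := Finset.sum_nonneg fun j _ => sq_nonneg _
    have hp1 : p.1 ^ 2 + ∑ j, p.2 j ^ 2 ≤ 1 := hp
    simp only [Metric.mem_closedBall, dist_zero_right, Prod.norm_def, max_le_iff]
    constructor
    · rw [Real.norm_eq_abs, ← sq_le_one_iff_abs_le_one]; nlinarith
    · refine (pi_norm_le_iff_of_nonneg zero_le_one).2 fun j => ?_
      have hj : p.2 j ^ 2 ≤ ∑ i, p.2 i ^ 2 :=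
        Finset.single_le_sum (fun i _ => sq_nonneg (p.2 i)) (Finset.mem_univ j)
      rw [Real.norm_eq_abs, ← sq_le_one_iff_abs_le_one]
      nlinarith
  have hint : IntegrableOn (fun p : ℝ × (Fin m → ℝ) => |p.1|) T :=
    (continuous_abs.comp continuous_fst).continuousOn.integrableOn_compact hTcomp
  have hindint : Integrable (T.indicator fun p : ℝ × (Fin m → ℝ) => |p.1|) :=
    (integrable_indicator_iff hTmeas).2 hint
  have step3 : ∫ p in T, |p.1|
      = ∫ t : ℝ, |t| * (volume {y : Fin m → ℝ | ∑ j, y j ^ 2 ≤ 1 - t^2}).toReal := by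
    rw [← MeasureTheory.integral_indicator hTmeas]
    rw [MeasureTheory.Measure.volume_eq_prod] at hindint ⊢
    rw [MeasureTheory.integral_prod _ hindint]
    congr 1
    funext t
    have hmeasSt : MeasurableSet {y : Fin m → ℝ | ∑ j, y j ^ 2 ≤ 1 - t^2} :=
      (isClosed_le (by fun_prop) continuous_const).measurableSet
    have heq : (fun y => T.indicator (fun p : ℝ × (Fin m → ℝ) => |p.1|) (t, y))
        = {y : Fin m → ℝ | ∑ j, y j ^ 2 ≤ 1 - t^2}.indicator (fun _ => |t|) := by
      funext y
      have hmem : ((t, y) ∈ T) ↔ (∑ j, y j ^ 2 ≤ 1 - t^2) := by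
        simp only [hTdef, Set.mem_setOf_eq]
        constructor <;> intro <;> linarith
      by_cases h : ∑ j, y j ^ 2 ≤ 1 - t^2
      · have hy : y ∈ {y : Fin m → ℝ | ∑ j, y j ^ 2 ≤ 1 - t^2} := h
        rw [Set.indicator_of_mem (hmem.2 h), Set.indicator_of_mem hy]
      · have hy : y ∉ {y : Fin m → ℝ | ∑ j, y j ^ 2 ≤ 1 - t^2} := h
        rw [Set.indicator_of_notMem (fun hc => h (hmem.1 hc)), Set.indicator_of_notMem hy]
    rw [heq, integral_indicator_const _ hmeasSt, smul_eq_mul, mul_comm]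
    rfl
  have hsupp : ∀ t : ℝ, t ∉ Set.Icc (-1:ℝ) 1 →
      |t| * (volume {y : Fin m → ℝ | ∑ j, y j ^ 2 ≤ 1 - t^2}).toReal = 0 := by
    intro t ht
    have h1 : 1 - t^2 < 0 := by
      simp only [Set.mem_Icc, not_and_or, not_le] at ht
      rcases ht with h | h <;> nlinarith
    have : {y : Fin m → ℝ | ∑ j, y j ^ 2 ≤ 1 - t^2} = ∅ := by
      ext y
      simp only [Set.mem_setOf_eq, Set.mem_empty_iff_false, iff_false, not_le]
      exact lt_of_lt_of_le h1 (Finset.sum_nonneg fun j _ => sq_nonneg _)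
    rw [this]
    simp
  rw [step1, step2, step3,
    ← MeasureTheory.setIntegral_eq_integral_of_forall_compl_eq_zero hsupp,
    MeasureTheory.integral_Icc_eq_integral_Ioc,
    ← intervalIntegral.integral_of_le (by norm_num : (-1:ℝ) ≤ 1)]
  have hcongr : ∫ t in (-1:ℝ)..(1:ℝ),
        |t| * (volume {y : Fin m → ℝ | ∑ j, y j ^ 2 ≤ 1 - t^2}).toReal
      = ∫ t in (-1:ℝ)..(1:ℝ), unitBallVol m * (|t| * Real.sqrt (1 - t^2) ^ m) := by
    apply intervalIntegral.integral_congr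
    intro t ht
    rw [Set.uIcc_of_le (by norm_num : (-1:ℝ) ≤ 1)] at ht
    have h1 : (0:ℝ) ≤ 1 - t^2 := by
      obtain ⟨h1, h2⟩ := ht; nlinarith
    dsimp only
    rw [slice_vol m h1, ENNReal.toReal_mul,
      ENNReal.toReal_ofReal (by positivity), unitBallVol]
    ring
  rw [hcongr, intervalIntegral.integral_const_mul, aux_integral]
  ring

lemma rot_lemma (m : ℕ) (φ : EuclideanSpace ℝ (Fin (m+1))) :
    ∫ x in Metric.closedBall (0 : EuclideanSpace ℝ (Fin (m+1))) 1, |(inner ℝ φ x : ℝ)|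
      = ‖φ‖ * ∫ x in Metric.closedBall (0 : EuclideanSpace ℝ (Fin (m+1))) 1, |x 0| := by
  rcases eq_or_ne φ 0 with rfl | hφ
  · simp
  · have hφn : ‖φ‖ ≠ 0 := norm_ne_zero_iff.2 hφ
    set u : EuclideanSpace ℝ (Fin (m+1)) := ‖φ‖⁻¹ • φ with hudef
    have hu : ‖u‖ = 1 := by
      rw [hudef, norm_smul, norm_inv, norm_norm, inv_mul_cancel₀ hφn]
    have hcard : Module.finrank ℝ (EuclideanSpace ℝ (Fin (m+1)))
        = Fintype.card (Fin (m+1)) := by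
      simp [finrank_euclideanSpace_fin]
    have horth : Orthonormal ℝ (Set.restrict {(0 : Fin (m+1))} (fun _ => u)) := by
      refine ⟨fun i => hu, fun i j hij => absurd (Subsingleton.elim i j) hij⟩
    obtain ⟨b, hb⟩ := horth.exists_orthonormalBasis_extension_of_card_eq hcard
    have hb0 : b 0 = u := hb 0 rfl
    have hmp := b.measurePreserving_measurableEquiv
    have h := hmp.setIntegral_preimage_emb b.measurableEquiv.measurableEmbedding
      (fun y => |y 0|) (Metric.closedBall 0 1)
    have hpre : ⇑b.measurableEquiv ⁻¹' Metric.closedBall 0 1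
        = Metric.closedBall (0 : EuclideanSpace ℝ (Fin (m+1))) 1 := by
      ext x
      simp only [Set.mem_preimage, Metric.mem_closedBall, dist_zero_right]
      have : ‖b.measurableEquiv x‖ = ‖x‖ := b.repr.norm_map x
      rw [this]
    rw [hpre] at h
    have hint : ∀ x : EuclideanSpace ℝ (Fin (m+1)),
        |(inner ℝ φ x : ℝ)| = ‖φ‖ * |(b.measurableEquiv x) 0| := by
      intro x
      have h1 : (b.measurableEquiv x) 0 = (inner ℝ u x : ℝ) := by
        show b.repr x 0 = _
        rw [← hb0, b.repr_apply_apply]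
      have h2 : (inner ℝ φ x : ℝ) = ‖φ‖ * (inner ℝ u x : ℝ) := by
        conv_lhs => rw [show φ = ‖φ‖ • u by rw [hudef, smul_smul,
          mul_inv_cancel₀ hφn, one_smul]]
        rw [real_inner_smul_left]
      rw [h1, h2, abs_mul, abs_of_nonneg (norm_nonneg φ)]
    calc ∫ x in Metric.closedBall (0 : EuclideanSpace ℝ (Fin (m+1))) 1, |(inner ℝ φ x : ℝ)|
        = ∫ x in Metric.closedBall (0 : EuclideanSpace ℝ (Fin (m+1))) 1,
            ‖φ‖ * |(b.measurableEquiv x) 0| := by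
          apply setIntegral_congr_fun (measurableSet_closedBall)
          intro x _
          exact hint x
      _ = ‖φ‖ * ∫ x in Metric.closedBall (0 : EuclideanSpace ℝ (Fin (m+1))) 1,
            |(b.measurableEquiv x) 0| := by rw [MeasureTheory.integral_const_mul]
      _ = ‖φ‖ * ∫ x in Metric.closedBall (0 : EuclideanSpace ℝ (Fin (m+1))) 1, |x 0| := by
          rw [h]

lemma scale_lemma (n : ℕ) (φ : EuclideanSpace ℝ (Fin n)) {r : ℝ} (hr : 0 < r) :
    ∫ x in Metric.closedBall (0 : EuclideanSpace ℝ (Fin n)) r, |(inner ℝ φ x : ℝ)|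
      = r^(n+1) * ∫ x in Metric.closedBall (0 : EuclideanSpace ℝ (Fin n)) 1,
          |(inner ℝ φ x : ℝ)| := by
  set g : EuclideanSpace ℝ (Fin n) → ℝ :=
    (Metric.closedBall (0 : EuclideanSpace ℝ (Fin n)) 1).indicator
      (fun y => |(inner ℝ φ y : ℝ)|) with hgdef
  have key := MeasureTheory.Measure.integral_comp_smul
    (volume : Measure (EuclideanSpace ℝ (Fin n))) g r⁻¹
  have hmem : ∀ x : EuclideanSpace ℝ (Fin n),
      (r⁻¹ • x ∈ Metric.closedBall (0 : EuclideanSpace ℝ (Fin n)) 1) ↔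
        x ∈ Metric.closedBall (0 : EuclideanSpace ℝ (Fin n)) r := by
    intro x
    simp only [Metric.mem_closedBall, dist_zero_right, norm_smul, norm_inv,
      Real.norm_eq_abs, abs_of_pos hr]
    rw [inv_mul_le_iff₀ hr, mul_one]
  have hlhs : (fun x : EuclideanSpace ℝ (Fin n) => g (r⁻¹ • x))
      = (Metric.closedBall (0 : EuclideanSpace ℝ (Fin n)) r).indicator
        (fun y => r⁻¹ * |(inner ℝ φ y : ℝ)|) := by
    funext x
    by_cases hx : x ∈ Metric.closedBall (0 : EuclideanSpace ℝ (Fin n)) r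
    · rw [hgdef, Set.indicator_of_mem ((hmem x).2 hx), Set.indicator_of_mem hx,
        real_inner_smul_right, abs_mul, abs_inv, abs_of_pos hr]
    · rw [hgdef, Set.indicator_of_notMem (fun hc => hx ((hmem x).1 hc)),
        Set.indicator_of_notMem hx]
  have hfr : Module.finrank ℝ (EuclideanSpace ℝ (Fin n)) = n := finrank_euclideanSpace_fin
  rw [hlhs, hfr] at key
  rw [MeasureTheory.integral_indicator measurableSet_closedBall] at key
  rw [MeasureTheory.integral_const_mul] at key
  have hg : ∫ x, g x = ∫ x in Metric.closedBall (0 : EuclideanSpace ℝ (Fin n)) 1,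
      |(inner ℝ φ x : ℝ)| := MeasureTheory.integral_indicator measurableSet_closedBall
  rw [hg] at key
  have habs : |((r⁻¹ : ℝ) ^ n)⁻¹| = r ^ n := by
    rw [← inv_pow, inv_inv, abs_of_pos (pow_pos hr n)]
  rw [habs, smul_eq_mul] at key
  have : ∫ x in Metric.closedBall (0 : EuclideanSpace ℝ (Fin n)) r, |(inner ℝ φ x : ℝ)|
      = r * (r⁻¹ * ∫ x in Metric.closedBall (0 : EuclideanSpace ℝ (Fin n)) r,
          |(inner ℝ φ x : ℝ)|) := by
    rw [← mul_assoc, mul_inv_cancel₀ hr.ne', one_mul]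
  rw [this, key, pow_succ]
  ring

end AuxLemmas

/-- if ε ∈ (0,1/2) and the convex body K satisfies (1−ε)B ⊆ K ⊆ (1+ε)B and
K = C_K·ΓK with C_K > 0, then ((1−ε)/(1+ε))^{n+1} ≤ C_B/C_K ≤ ((1+ε)/(1−ε))^{n+1},
where C_B = (n+1)κ_n/(2κ_{n−1}). -/
theorem centroid_constant_stability (n : ℕ) (hn : 3 ≤ n) (ε : ℝ) (hε0 : 0 < ε) (hε : ε < 1 / 2)
    (K : Set (EuclideanSpace ℝ (Fin n))) (hKconv : Convex ℝ K) (hKcomp : IsCompact K)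
    (h0K : (0 : EuclideanSpace ℝ (Fin n)) ∈ interior K)
    (hK1 : (1 - ε) • Metric.closedBall (0 : EuclideanSpace ℝ (Fin n)) 1 ⊆ K)
    (hK2 : K ⊆ (1 + ε) • Metric.closedBall (0 : EuclideanSpace ℝ (Fin n)) 1)
    (CK : ℝ) (hCK : 0 < CK) (hfix : K = CK • centroidBody n K) :
    ((1 - ε) / (1 + ε)) ^ (n + 1) ≤
        (((n : ℝ) + 1) * unitBallVol n / (2 * unitBallVol (n - 1))) / CK ∧
      (((n : ℝ) + 1) * unitBallVol n / (2 * unitBallVol (n - 1))) / CK ≤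
        ((1 + ε) / (1 - ε)) ^ (n + 1) := by
  obtain ⟨m, rfl⟩ : ∃ m, n = m + 1 := ⟨n - 1, (Nat.succ_pred_eq_of_pos (by omega)).symm⟩
  simp only [Nat.add_sub_cancel]
  have hε1 : (0:ℝ) < 1 - ε := by linarith
  have hε2 : (0:ℝ) < 1 + ε := by linarith
  set κ := unitBallVol (m+1) with hκdef
  set κ' := unitBallVol m with hκ'def
  have hκpos : 0 < κ := by
    rw [hκdef, unitBallVol]
    exact ENNReal.toReal_pos (Metric.measure_ball_pos volume 0 one_pos).ne' measure_ball_lt_top.ne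
  have hκ'pos : 0 < κ' := by
    rw [hκ'def, unitBallVol]
    exact ENNReal.toReal_pos (Metric.measure_ball_pos volume 0 one_pos).ne' measure_ball_lt_top.ne
  set Jc : ℝ := 2 / ((m:ℝ) + 2) * κ' with hJcdef
  have hJcpos : 0 < Jc := by rw [hJcdef]; positivity
  have hball : ∀ r : ℝ, 0 ≤ r →
      r • Metric.closedBall (0 : EuclideanSpace ℝ (Fin (m+1))) 1
        = Metric.closedBall (0 : EuclideanSpace ℝ (Fin (m+1))) r := by
    intro r hr
    rw [smul_closedBall _ _ zero_le_one, smul_zero, Real.norm_eq_abs, abs_of_nonneg hr,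
      mul_one]
  have hK1' : Metric.closedBall (0 : EuclideanSpace ℝ (Fin (m+1))) (1-ε) ⊆ K := by
    rw [← hball _ hε1.le]; exact hK1
  have hK2' : K ⊆ Metric.closedBall (0 : EuclideanSpace ℝ (Fin (m+1))) (1+ε) := by
    rw [hball _ hε2.le] at hK2; exact hK2
  have hKmeas : MeasurableSet K := hKcomp.isClosed.measurableSet
  have hvolball : ∀ r : ℝ, 0 ≤ r →
      (volume (Metric.closedBall (0 : EuclideanSpace ℝ (Fin (m+1))) r)).toReal
        = r^(m+1) * κ := by
    intro r hr
    rw [MeasureTheory.Measure.addHaar_closedBall volume 0 hr, finrank_euclideanSpace_fin,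
      ENNReal.toReal_mul, ENNReal.toReal_ofReal (by positivity)]
    rfl
  have hvolK_fin : volume K ≠ ⊤ :=
    (lt_of_le_of_lt (measure_mono hK2') measure_closedBall_lt_top).ne
  set VK := (volume K).toReal with hVKdef
  have hVK_ge : (1-ε)^(m+1) * κ ≤ VK := by
    rw [← hvolball _ hε1.le]
    exact ENNReal.toReal_mono hvolK_fin (measure_mono hK1')
  have hVK_le : VK ≤ (1+ε)^(m+1) * κ := by
    rw [← hvolball _ hε2.le]
    exact ENNReal.toReal_mono measure_closedBall_lt_top.ne (measure_mono hK2')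
  have hVKpos : 0 < VK := lt_of_lt_of_le (by positivity) hVK_ge
  have hcontφ : ∀ φ : EuclideanSpace ℝ (Fin (m+1)),
      Continuous fun x : EuclideanSpace ℝ (Fin (m+1)) => |(inner ℝ φ x : ℝ)| := by
    intro φ
    exact (continuous_const.inner continuous_id).abs
  have hIbig : ∀ φ : EuclideanSpace ℝ (Fin (m+1)),
      IntegrableOn (fun x => |(inner ℝ φ x : ℝ)|)
        (Metric.closedBall (0 : EuclideanSpace ℝ (Fin (m+1))) (1+ε)) := fun φ =>
    ((hcontφ φ).continuousOn).integrableOn_compact (isCompact_closedBall _ _)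
  have hIK : ∀ φ : EuclideanSpace ℝ (Fin (m+1)),
      IntegrableOn (fun x => |(inner ℝ φ x : ℝ)|) K := fun φ => (hIbig φ).mono_set hK2'
  have hIball : ∀ (φ : EuclideanSpace ℝ (Fin (m+1))) (r : ℝ), 0 < r →
      ∫ x in Metric.closedBall (0 : EuclideanSpace ℝ (Fin (m+1))) r, |(inner ℝ φ x : ℝ)|
        = r^(m+2) * ‖φ‖ * Jc := by
    intro φ r hr
    rw [scale_lemma _ _ hr, rot_lemma, ball_integral_coord, hJcdef, hκ'def]
    ring
  have hup : ∀ φ : EuclideanSpace ℝ (Fin (m+1)),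
      ∫ x in K, |(inner ℝ φ x : ℝ)| ≤ (1+ε)^(m+2) * ‖φ‖ * Jc := by
    intro φ
    rw [← hIball φ _ hε2]
    exact setIntegral_mono_set (hIbig φ)
      (Filter.Eventually.of_forall fun x => abs_nonneg _) hK2'.eventuallyLE
  have hlo : ∀ φ : EuclideanSpace ℝ (Fin (m+1)),
      (1-ε)^(m+2) * ‖φ‖ * Jc ≤ ∫ x in K, |(inner ℝ φ x : ℝ)| := by
    intro φ
    rw [← hIball φ _ hε1]
    exact setIntegral_mono_set (hIK φ)
      (Filter.Eventually.of_forall fun x => abs_nonneg _) hK1'.eventuallyLE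
  set U := (1+ε)^(m+2) * Jc / ((1-ε)^(m+1) * κ) with hUdef
  set L := (1-ε)^(m+2) * Jc / ((1+ε)^(m+1) * κ) with hLdef
  have hUpos : 0 < U := by rw [hUdef]; positivity
  have hLpos : 0 < L := by rw [hLdef]; positivity
  have hhU : ∀ φ : EuclideanSpace ℝ (Fin (m+1)),
      VK⁻¹ * ∫ x in K, |(inner ℝ φ x : ℝ)| ≤ U * ‖φ‖ := by
    intro φ
    have h1 : VK⁻¹ ≤ ((1-ε)^(m+1) * κ)⁻¹ := by
      apply inv_anti₀ (by positivity) hVK_ge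
    have h2 : 0 ≤ ∫ x in K, |(inner ℝ φ x : ℝ)| :=
      setIntegral_nonneg hKmeas (fun x _ => abs_nonneg _)
    calc VK⁻¹ * ∫ x in K, |(inner ℝ φ x : ℝ)|
        ≤ ((1-ε)^(m+1) * κ)⁻¹ * ((1+ε)^(m+2) * ‖φ‖ * Jc) :=
          mul_le_mul h1 (hup φ) h2 (by positivity)
      _ = U * ‖φ‖ := by
          rw [hUdef]
          field_simp
  have hhL : ∀ φ : EuclideanSpace ℝ (Fin (m+1)),
      L * ‖φ‖ ≤ VK⁻¹ * ∫ x in K, |(inner ℝ φ x : ℝ)| := by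
    intro φ
    have h1 : ((1+ε)^(m+1) * κ)⁻¹ ≤ VK⁻¹ := inv_anti₀ hVKpos hVK_le
    calc L * ‖φ‖ = ((1+ε)^(m+1) * κ)⁻¹ * ((1-ε)^(m+2) * ‖φ‖ * Jc) := by
          rw [hLdef]
          field_simp
      _ ≤ VK⁻¹ * ((1-ε)^(m+2) * ‖φ‖ * Jc) :=
          mul_le_mul_of_nonneg_right h1 (by positivity)
      _ ≤ VK⁻¹ * ∫ x in K, |(inner ℝ φ x : ℝ)| :=
          mul_le_mul_of_nonneg_left (hlo φ) (inv_nonneg.2 hVKpos.le)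
  have hΓU : centroidBody (m+1) K ⊆ Metric.closedBall (0 : EuclideanSpace ℝ (Fin (m+1))) U := by
    intro y hy
    have h := hy y
    rw [← hVKdef] at h
    rw [Metric.mem_closedBall, dist_zero_right]
    have h2 : ‖y‖^2 ≤ U * ‖y‖ := by
      calc ‖y‖^2 = (inner ℝ y y : ℝ) := (real_inner_self_eq_norm_sq y).symm
        _ ≤ VK⁻¹ * ∫ x in K, |(inner ℝ y x : ℝ)| := h
        _ ≤ U * ‖y‖ := hhU y
    rcases eq_or_lt_of_le (norm_nonneg y) with h0 | h0
    · rw [← h0]; exact hUpos.le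
    · nlinarith
  have hΓL : Metric.closedBall (0 : EuclideanSpace ℝ (Fin (m+1))) L ⊆ centroidBody (m+1) K := by
    intro y hy φ
    rw [Metric.mem_closedBall, dist_zero_right] at hy
    rw [← hVKdef]
    calc (inner ℝ y φ : ℝ) ≤ ‖y‖ * ‖φ‖ := real_inner_le_norm y φ
      _ ≤ L * ‖φ‖ := mul_le_mul_of_nonneg_right hy (norm_nonneg φ)
      _ ≤ VK⁻¹ * ∫ x in K, |(inner ℝ φ x : ℝ)| := hhL φ
  set ev : EuclideanSpace ℝ (Fin (m+1)) := EuclideanSpace.single (0 : Fin (m+1)) (1:ℝ)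
    with hevdef
  have hnorme : ‖ev‖ = 1 := by rw [hevdef, EuclideanSpace.norm_single]; norm_num
  have hCU : 1 - ε ≤ CK * U := by
    have hmem0 : ev ∈ Metric.closedBall (0 : EuclideanSpace ℝ (Fin (m+1))) 1 := by
      rw [mem_closedBall_zero_iff, hnorme]
    have hmem : (1-ε) • ev ∈ K := hK1 (Set.smul_mem_smul_set hmem0)
    rw [hfix] at hmem
    have hmem2 : (1-ε) • ev ∈ CK • Metric.closedBall (0 : EuclideanSpace ℝ (Fin (m+1))) U :=
      Set.smul_set_mono hΓU hmem
    rw [smul_closedBall _ _ hUpos.le, smul_zero, mem_closedBall_zero_iff] at hmem2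
    calc 1 - ε = ‖(1-ε) • ev‖ := by
          rw [norm_smul, Real.norm_eq_abs, abs_of_pos hε1, hnorme, mul_one]
      _ ≤ ‖CK‖ * U := hmem2
      _ = CK * U := by rw [Real.norm_eq_abs, abs_of_pos hCK]
  have hCL : CK * L ≤ 1 + ε := by
    have hball2 : Metric.closedBall (0 : EuclideanSpace ℝ (Fin (m+1))) (CK * L)
        = CK • Metric.closedBall (0 : EuclideanSpace ℝ (Fin (m+1))) L := by
      rw [smul_closedBall _ _ hLpos.le, smul_zero, Real.norm_eq_abs, abs_of_pos hCK]
    have hsub : Metric.closedBall (0 : EuclideanSpace ℝ (Fin (m+1))) (CK * L) ⊆ K := by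
      rw [hball2, hfix]
      exact Set.smul_set_mono hΓL
    have hmem : (CK * L) • ev ∈ Metric.closedBall (0 : EuclideanSpace ℝ (Fin (m+1)))
        (CK * L) := by
      rw [mem_closedBall_zero_iff, norm_smul, hnorme, mul_one, Real.norm_eq_abs,
        abs_of_pos (by positivity)]
    have hfin := hK2' (hsub hmem)
    rw [mem_closedBall_zero_iff, norm_smul, hnorme, mul_one, Real.norm_eq_abs,
      abs_of_pos (by positivity)] at hfin
    exact hfin
  have hm2 : ((m:ℝ) + 2) ≠ 0 := by positivity
  constructor
  · rw [le_div_iff₀ hCK]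
    have hCKle : CK ≤ (1+ε)/L := (le_div_iff₀ hLpos).2 hCL
    calc ((1-ε)/(1+ε))^(m+1+1) * CK
        ≤ ((1-ε)/(1+ε))^(m+1+1) * ((1+ε)/L) :=
          mul_le_mul_of_nonneg_left hCKle (by positivity)
      _ = (((m:ℝ)+1)+1) * κ / (2 * κ') := by
          rw [hLdef, hJcdef, div_pow]
          field_simp
          ring
      _ = (((m+1:ℕ):ℝ)+1) * κ / (2 * κ') := by push_cast; ring
  · rw [div_le_iff₀ hCK]
    have hCKge : (1-ε)/U ≤ CK := (div_le_iff₀ hUpos).2 hCU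
    calc (((m+1:ℕ):ℝ)+1) * κ / (2 * κ')
        = ((1+ε)/(1-ε))^(m+1+1) * ((1-ε)/U) := by
          rw [hUdef, hJcdef, div_pow]
          push_cast
          field_simp
          ring
      _ ≤ ((1+ε)/(1-ε))^(m+1+1) * CK :=
          mul_le_mul_of_nonneg_left hCKge (by positivity)
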